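/- Let o, q₀, q₁, q₂ ∈ ℝ³ with q₀, q₁, q₂ not collinear, let H be the plane through q₀, q₁, q₂, and let o′ be the orthogonal projection of o onto H. Suppose o′ = q₁ + a·(q₀ − q₁) + b·(q₂ − q₁) with a > 0 and b > 0 (o′ lies in the interior of the convex angular region at q₁ bounded by the rays toward q₀ and q₂), and suppose the distance to o strictly increases along the polygonal path q₀ → q₁ → q₂ (if x strictly precedes y on the path then ‖x − o‖ < ‖y − o‖). Then dist(o, line(q₀, q₁)) < dist(o, line(q₁, q₂)). -/

import Mathlib

set_option maxHeartbeats 1000000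


open scoped RealInnerProductSpace

/-- The squared distance from a point to the line through two distinct points. -/
lemma infDist_span_pair_sq {E : Type*} [NormedAddCommGroup E] [InnerProductSpace ℝ E]
    (o x y : E) (h : y ≠ x) :
    Metric.infDist o (affineSpan ℝ {x, y} : Set E) ^ 2
      = ‖o - x‖ ^ 2 - ⟪y - x, o - x⟫ ^ 2 / ‖y - x‖ ^ 2 := by
  set u : E := y - x with hu_def
  have hu : u ≠ 0 := sub_ne_zero.mpr h
  have hA : (0:ℝ) < ‖u‖ ^ 2 := pow_pos (norm_pos_iff.mpr hu) 2
  set d : ℝ := ⟪u, o - x⟫ / ‖u‖ ^ 2 with hd_def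
  set foot : E := d • u + x with hfoot_def
  have hfoot_mem : foot ∈ (affineSpan ℝ {x, y} : Set E) := by
    have := smul_vsub_vadd_mem_affineSpan_pair (k := ℝ) d x y
    simpa [hfoot_def, vsub_eq_sub, vadd_eq_add] using this
  have hdA : d * ‖u‖ ^ 2 = ⟪u, o - x⟫ := by
    rw [hd_def, div_mul_cancel₀ _ hA.ne']
  have hmin : ∀ z ∈ (affineSpan ℝ {x, y} : Set E), dist o foot ≤ dist o z := by
    intro z hz
    have hz' : (z - x) +ᵥ x ∈ line[ℝ, x, y] := by
      simpa [vadd_eq_add, sub_add_cancel] using hz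
    obtain ⟨r, hr⟩ := vadd_left_mem_affineSpan_pair.mp hz'
    have hzr : z = r • u + x := by
      rw [hu_def, ← vsub_eq_sub y x, hr]
      abel
    rw [dist_eq_norm, dist_eq_norm, hzr, hfoot_def]
    have h1 : o - (d • u + x) = (o - x) - d • u := by abel
    have h2 : o - (r • u + x) = (o - x) - r • u := by abel
    rw [h1, h2]
    have e1 : ‖(o - x) - d • u‖ ^ 2
        = ‖o - x‖ ^ 2 - 2 * (d * ⟪u, o - x⟫) + d ^ 2 * ‖u‖ ^ 2 := by
      rw [norm_sub_sq_real, real_inner_smul_right, norm_smul, Real.norm_eq_abs,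
        mul_pow, sq_abs, real_inner_comm u (o - x)]
    have e2 : ‖(o - x) - r • u‖ ^ 2
        = ‖o - x‖ ^ 2 - 2 * (r * ⟪u, o - x⟫) + r ^ 2 * ‖u‖ ^ 2 := by
      rw [norm_sub_sq_real, real_inner_smul_right, norm_smul, Real.norm_eq_abs,
        mul_pow, sq_abs, real_inner_comm u (o - x)]
    have hsq : ‖(o - x) - d • u‖ ^ 2 ≤ ‖(o - x) - r • u‖ ^ 2 := by
      rw [e1, e2, ← hdA]
      nlinarith [mul_nonneg (sq_nonneg (r - d)) hA.le]
    nlinarith [norm_nonneg ((o - x) - d • u), norm_nonneg ((o - x) - r • u), hsq]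
  have hinf : Metric.infDist o (affineSpan ℝ {x, y} : Set E) = dist o foot := by
    refine le_antisymm (Metric.infDist_le_dist_of_mem hfoot_mem) ?_
    by_contra hlt
    push_neg at hlt
    obtain ⟨z, hzmem, hzlt⟩ :=
      (Metric.infDist_lt_iff ⟨foot, hfoot_mem⟩).mp hlt
    exact absurd hzlt (not_lt.mpr (hmin z hzmem))
  rw [hinf, dist_eq_norm]
  have h1 : o - foot = (o - x) - d • u := by rw [hfoot_def]; abel
  rw [h1]
  have e1 : ‖(o - x) - d • u‖ ^ 2
      = ‖o - x‖ ^ 2 - 2 * (d * ⟪u, o - x⟫) + d ^ 2 * ‖u‖ ^ 2 := by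
    rw [norm_sub_sq_real, real_inner_smul_right, norm_smul, Real.norm_eq_abs,
      mul_pow, sq_abs, real_inner_comm u (o - x)]
  rw [e1, hd_def]
  field_simp
  ring

/-- if the orthogonal projection `o'` of `o` onto the plane `H` through the
non-collinear points `q₀, q₁, q₂` lies in the interior of the convex angular region at
`q₁` bounded by the rays toward `q₀` and `q₂`, and the distance to `o` strictly increases
along the polygonal path `q₀ → q₁ → q₂`, then the line through `q₀, q₁` is strictly
closer to `o` than the line through `q₁, q₂`. -/
theorem infDist_line_lt_of_ascending_corner
    (o q₀ q₁ q₂ o' : EuclideanSpace ℝ (Fin 3))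
    (hcol : ¬ Collinear ℝ ({q₀, q₁, q₂} : Set (EuclideanSpace ℝ (Fin 3))))
    (H : Set (EuclideanSpace ℝ (Fin 3)))
    (hH : H = (affineSpan ℝ {q₀, q₁, q₂} : Set (EuclideanSpace ℝ (Fin 3))))
    -- `o'` is the orthogonal projection of `o` onto `H`
    (ho'H : o' ∈ H) (ho'perp : ∀ x ∈ H, ⟪o - o', x - o'⟫ = 0)
    (a b : ℝ) (ha : 0 < a) (hb : 0 < b)
    (ho' : o' = q₁ + a • (q₀ - q₁) + b • (q₂ - q₁))
    -- the distance to `o` strictly increases along the path `q₀ → q₁ → q₂`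
    (hmono₁ : StrictMonoOn (fun t : ℝ => ‖AffineMap.lineMap q₀ q₁ t - o‖) (Set.Icc 0 1))
    (hmono₂ : StrictMonoOn (fun t : ℝ => ‖AffineMap.lineMap q₁ q₂ t - o‖) (Set.Icc 0 1)) :
    Metric.infDist o (affineSpan ℝ {q₀, q₁} : Set (EuclideanSpace ℝ (Fin 3))) <
    Metric.infDist o (affineSpan ℝ {q₁, q₂} : Set (EuclideanSpace ℝ (Fin 3))) := by
  classical
  -- basic nondegeneracy
  have h01 : q₀ ≠ q₁ := by
    rintro rfl
    exact hcol (by simpa using collinear_pair ℝ q₀ q₂)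
  have h21 : q₂ ≠ q₁ := by
    rintro rfl
    exact hcol (by simpa [Set.insert_comm] using collinear_pair ℝ q₀ q₂)
  set u : EuclideanSpace ℝ (Fin 3) := q₀ - q₁ with hu_def
  set v : EuclideanSpace ℝ (Fin 3) := q₂ - q₁ with hv_def
  set w : EuclideanSpace ℝ (Fin 3) := o - q₁ with hw_def
  have hu : u ≠ 0 := sub_ne_zero.mpr h01
  have hv : v ≠ 0 := sub_ne_zero.mpr h21
  set A : ℝ := ‖u‖ ^ 2 with hA_def
  set B : ℝ := ‖v‖ ^ 2 with hB_def
  set C : ℝ := ⟪u, v⟫ with hC_def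
  have hA : (0:ℝ) < A := pow_pos (norm_pos_iff.mpr hu) 2
  have hB : (0:ℝ) < B := pow_pos (norm_pos_iff.mpr hv) 2
  -- strict Cauchy-Schwarz
  have hCS : C ^ 2 < A * B := by
    have hz : v - (C / A) • u ≠ 0 := by
      intro hz0
      apply hcol
      rw [collinear_iff_exists_forall_eq_smul_vadd]
      refine ⟨q₁, u, ?_⟩
      intro p hp
      rcases hp with rfl | rfl | rfl
      · exact ⟨1, by simp [hu_def, vadd_eq_add]⟩
      · exact ⟨0, by simp [vadd_eq_add]⟩
      · refine ⟨C / A, ?_⟩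
        have : v = (C / A) • u := by
          have := sub_eq_zero.mp hz0
          exact this
        rw [vadd_eq_add, ← this, hv_def]
        abel
    have hz2 : (0:ℝ) < ‖v - (C / A) • u‖ ^ 2 := pow_pos (norm_pos_iff.mpr hz) 2
    have e : ‖v - (C / A) • u‖ ^ 2 = B - C ^ 2 / A := by
      rw [norm_sub_sq_real, real_inner_smul_right, norm_smul, Real.norm_eq_abs,
        mul_pow, sq_abs, show ⟪v, u⟫ = C from real_inner_comm u v]
      rw [← hB_def, ← hA_def]
      field_simp
      ring
    rw [e] at hz2
    have := (div_lt_iff₀ hA).mp (by linarith : C ^ 2 / A < B)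
    linarith [this]
  -- perpendicularity of o - o' to u and v
  have hq₀H : q₀ ∈ H := by rw [hH]; exact subset_affineSpan ℝ _ (by simp)
  have hq₁H : q₁ ∈ H := by rw [hH]; exact subset_affineSpan ℝ _ (by simp)
  have hq₂H : q₂ ∈ H := by rw [hH]; exact subset_affineSpan ℝ _ (by simp)
  have e0 := ho'perp q₀ hq₀H
  have e1 := ho'perp q₁ hq₁H
  have e2 := ho'perp q₂ hq₂H
  have hpu : ⟪o - o', u⟫ = 0 := by
    have hrepr : u = (q₀ - o') - (q₁ - o') := by rw [hu_def]; abel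
    rw [hrepr, inner_sub_right, e0, e1, sub_zero]
  have hpv : ⟪o - o', v⟫ = 0 := by
    have hrepr : v = (q₂ - o') - (q₁ - o') := by rw [hv_def]; abel
    rw [hrepr, inner_sub_right, e2, e1, sub_zero]
  -- inner products of u, v with w
  have hwdecomp : w = (o - o') + (a • u + b • v) := by
    rw [hw_def, ho', hu_def, hv_def]; abel
  have hIu : ⟪u, w⟫ = a * A + b * C := by
    rw [hwdecomp, inner_add_right, inner_add_right, real_inner_smul_right,
      real_inner_smul_right, real_inner_self_eq_norm_sq,
      show ⟪u, o - o'⟫ = 0 from by rw [real_inner_comm]; exact hpu]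
    rw [← hA_def, ← hC_def]; ring
  have hIv : ⟪v, w⟫ = a * C + b * B := by
    rw [hwdecomp, inner_add_right, inner_add_right, real_inner_smul_right,
      real_inner_smul_right, real_inner_self_eq_norm_sq,
      show ⟪v, o - o'⟫ = 0 from by rw [real_inner_comm]; exact hpv,
      show ⟪v, u⟫ = C from real_inner_comm u v]
    rw [← hB_def]; ring
  -- monotonicity consequences
  have hIu_ge : A ≤ ⟪u, w⟫ := by
    by_contra hlt
    push_neg at hlt
    set I : ℝ := ⟪u, w⟫
    set ε : ℝ := min 1 ((A - I) / A) with hε_def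
    have hε0 : 0 < ε := lt_min one_pos (div_pos (by linarith) hA)
    have hε1 : ε ≤ 1 := min_le_left _ _
    have hεA : ε * A ≤ A - I := by
      have := min_le_right 1 ((A - I) / A)
      calc ε * A ≤ ((A - I) / A) * A := by nlinarith
        _ = A - I := by field_simp
    have hkey := hmono₁ (Set.mem_Icc.mpr ⟨le_refl 0, zero_le_one⟩)
      (Set.mem_Icc.mpr ⟨hε0.le, hε1⟩) hε0
    simp only at hkey
    have hl0 : AffineMap.lineMap q₀ q₁ (0:ℝ) - o = u - w := by
      rw [AffineMap.lineMap_apply]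
      simp [vadd_eq_add, vsub_eq_sub, hu_def, hw_def]
    have hlε : AffineMap.lineMap q₀ q₁ ε - o = (1 - ε) • u - w := by
      rw [AffineMap.lineMap_apply]
      simp only [vadd_eq_add, vsub_eq_sub, hu_def, hw_def, sub_smul, one_smul,
        smul_sub]
      abel
    rw [hl0, hlε] at hkey
    have hsq : ‖u - w‖ ^ 2 < ‖(1 - ε) • u - w‖ ^ 2 :=
      pow_lt_pow_left₀ hkey (norm_nonneg _) two_ne_zero
    have ea : ‖u - w‖ ^ 2 = A - 2 * I + ‖w‖ ^ 2 := by
      rw [norm_sub_sq_real]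
    have eb : ‖(1 - ε) • u - w‖ ^ 2
        = (1 - ε) ^ 2 * A - 2 * ((1 - ε) * I) + ‖w‖ ^ 2 := by
      rw [norm_sub_sq_real, real_inner_smul_left, norm_smul, Real.norm_eq_abs,
        mul_pow, sq_abs]
    rw [ea, eb] at hsq
    nlinarith
  have hIv_le : ⟪v, w⟫ ≤ 0 := by
    by_contra hlt
    push_neg at hlt
    set I : ℝ := ⟪v, w⟫
    set ε : ℝ := min 1 (I / B) with hε_def
    have hε0 : 0 < ε := lt_min one_pos (div_pos hlt hB)
    have hε1 : ε ≤ 1 := min_le_left _ _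
    have hεB : ε * B ≤ I := by
      have := min_le_right 1 (I / B)
      calc ε * B ≤ (I / B) * B := by nlinarith
        _ = I := by field_simp
    have hkey := hmono₂ (Set.mem_Icc.mpr ⟨le_refl 0, zero_le_one⟩)
      (Set.mem_Icc.mpr ⟨hε0.le, hε1⟩) hε0
    simp only at hkey
    have hl0 : AffineMap.lineMap q₁ q₂ (0:ℝ) - o = -w := by
      rw [AffineMap.lineMap_apply]
      simp [vadd_eq_add, vsub_eq_sub, hw_def]
    have hlε : AffineMap.lineMap q₁ q₂ ε - o = ε • v - w := by
      rw [AffineMap.lineMap_apply]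
      simp only [vadd_eq_add, vsub_eq_sub, hv_def, hw_def]
      abel
    rw [hl0, hlε] at hkey
    have hsq : ‖-w‖ ^ 2 < ‖ε • v - w‖ ^ 2 :=
      pow_lt_pow_left₀ hkey (norm_nonneg _) two_ne_zero
    have ea : ‖-w‖ ^ 2 = ‖w‖ ^ 2 := by rw [norm_neg]
    have eb : ‖ε • v - w‖ ^ 2 = ε ^ 2 * B - 2 * (ε * I) + ‖w‖ ^ 2 := by
      rw [norm_sub_sq_real, real_inner_smul_left, norm_smul, Real.norm_eq_abs,
        mul_pow, sq_abs]
    rw [ea, eb] at hsq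
    nlinarith
  -- rewrite both infDists via the formula
  have hD₁ : Metric.infDist o (affineSpan ℝ {q₀, q₁} : Set (EuclideanSpace ℝ (Fin 3))) ^ 2
      = ‖w‖ ^ 2 - ⟪u, w⟫ ^ 2 / A := by
    rw [Set.pair_comm q₀ q₁]
    rw [infDist_span_pair_sq o q₁ q₀ h01]
  have hD₂ : Metric.infDist o (affineSpan ℝ {q₁, q₂} : Set (EuclideanSpace ℝ (Fin 3))) ^ 2
      = ‖w‖ ^ 2 - ⟪v, w⟫ ^ 2 / B := by
    rw [infDist_span_pair_sq o q₁ q₂ h21]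
  -- main algebraic inequality
  have hmain : ⟪v, w⟫ ^ 2 * A < ⟪u, w⟫ ^ 2 * B := by
    rw [hIu, hIv]
    set sA : ℝ := Real.sqrt A with hsA_def
    set sB : ℝ := Real.sqrt B with hsB_def
    have hsA2 : sA ^ 2 = A := Real.sq_sqrt hA.le
    have hsB2 : sB ^ 2 = B := Real.sq_sqrt hB.le
    have hsA0 : 0 < sA := Real.sqrt_pos.mpr hA
    have hsB0 : 0 < sB := Real.sqrt_pos.mpr hB
    have hCpos : 0 < C + sA * sB := by nlinarith [mul_pos hsA0 hsB0, sq_nonneg (C + sA * sB)]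
    have hPpos : 0 < a * sA + b * sB := by positivity
    have hY : 0 < a * A + b * C := by
      have := hIu_ge; rw [hIu] at this; linarith
    have hX : a * C + b * B ≤ 0 := by
      have := hIv_le; rw [hIv] at this; linarith
    have hid : (a * A + b * C) * sB + (a * C + b * B) * sA
        = (C + sA * sB) * (a * sA + b * sB) := by
      rw [← hsA2, ← hsB2]; ring
    have h2 : 0 < (a * A + b * C) * sB + (a * C + b * B) * sA := by
      rw [hid]; exact mul_pos hCpos hPpos
    have h1 : 0 < (a * A + b * C) * sB - (a * C + b * B) * sA := by
      have h1a : (a * C + b * B) * sA ≤ 0 := mul_nonpos_of_nonpos_of_nonneg hX hsA0.le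
      have h1b : 0 < (a * A + b * C) * sB := mul_pos hY hsB0
      linarith
    have hprod : 0 < ((a * A + b * C) * sB - (a * C + b * B) * sA)
        * ((a * A + b * C) * sB + (a * C + b * B) * sA) := mul_pos h1 h2
    have hexp : ((a * A + b * C) * sB) ^ 2 - ((a * C + b * B) * sA) ^ 2
        = (a * A + b * C) ^ 2 * B - (a * C + b * B) ^ 2 * A := by
      rw [← hsA2, ← hsB2]; ring
    have hfinal : 0 < (a * A + b * C) ^ 2 * B - (a * C + b * B) ^ 2 * A := by
      calc (0:ℝ) < ((a * A + b * C) * sB - (a * C + b * B) * sA)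
            * ((a * A + b * C) * sB + (a * C + b * B) * sA) := hprod
        _ = ((a * A + b * C) * sB) ^ 2 - ((a * C + b * B) * sA) ^ 2 := by ring
        _ = (a * A + b * C) ^ 2 * B - (a * C + b * B) ^ 2 * A := hexp
    linarith
  have hsq : Metric.infDist o (affineSpan ℝ {q₀, q₁} : Set (EuclideanSpace ℝ (Fin 3))) ^ 2
      < Metric.infDist o (affineSpan ℝ {q₁, q₂} : Set (EuclideanSpace ℝ (Fin 3))) ^ 2 := by
    rw [hD₁, hD₂]
    have : ⟪v, w⟫ ^ 2 / B < ⟪u, w⟫ ^ 2 / A := by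
      rw [div_lt_div_iff₀ hB hA]
      exact hmain
    linarith
  exact lt_of_pow_lt_pow_left₀ 2 Metric.infDist_nonneg hsq
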